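/- arXiv:1404.3221 — 3 statements merged into one kernel-verified Lean document; each statement's English description precedes it below -/
import Mathlib

section
/- Let V > 0, k > 0, and 0 < r_a < r_star. If V / r_star = k * V * |cos(π - arcsin(r_a / r_star))|, then r_star = sqrt(r_a^2 + 1/k^2). -/
theorem stmt_0 (V k r_a r_star : ℝ) (hV : 0 < V) (hk : 0 < k)
    (hra : 0 < r_a) (hlt : r_a < r_star)
    (h : V / r_star = k * V * |Real.cos (Real.pi - Real.arcsin (r_a / r_star))|) :
    r_star = Real.sqrt (r_a ^ 2 + 1 / k ^ 2) := by
  have hrs : 0 < r_star := hra.trans hlt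
  rw [Real.cos_pi_sub, abs_neg, Real.cos_arcsin,
    abs_of_nonneg (Real.sqrt_nonneg _)] at h
  field_simp at h
  have h1 : 1 = Real.sqrt (r_star ^ 2 - r_a ^ 2) * k := by
    have := mul_right_cancel₀ hV.ne' (by rw [Real.sqrt_div' _ (sq_nonneg _), Real.sqrt_sq hrs.le] at h; have e : r_star * k * (Real.sqrt (r_star ^ 2 - r_a ^ 2) / r_star) = Real.sqrt (r_star ^ 2 - r_a ^ 2) * k := (by field_simp [hrs.ne']); rw [e] at h; rw [← h] : (1:ℝ) * V = Real.sqrt (r_star ^ 2 - r_a ^ 2) * k * V)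
    linarith
  have hnn : 0 ≤ r_star ^ 2 - r_a ^ 2 := by nlinarith
  have h2 : 1 = (r_star ^ 2 - r_a ^ 2) * k ^ 2 := by
    have := Real.sq_sqrt hnn
    nlinarith [h1]
  have h3 : r_star ^ 2 = r_a ^ 2 + 1 / k ^ 2 := by
    field_simp
    nlinarith
  rw [← h3, Real.sqrt_sq hrs.le]
end

section
/- Let V > 0, k > 0, r ≥ r_a > 0 with k*sqrt(1 - r_a^2/r^2) ≥ 1/r (equivalently k*cos(arcsin(r_a/r)) ≥ 1/r). For θ ∈ [0, π], define D(r,θ) = V*cos(θ)*(-k*cos(θ) - sin(θ)/r + 1/r). If additionally k ≥ 1/r, then D(r,θ) ≤ 0. -/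
theorem stmt_5 (V k r_a r θ : ℝ) (hV : 0 < V) (hk : 0 < k)
    (hra : 0 < r_a) (hr : r_a ≤ r)
    (hcond : 1 / r ≤ k * Real.sqrt (1 - r_a ^ 2 / r ^ 2))
    (hθ : θ ∈ Set.Icc 0 Real.pi) (hkr : 1 / r ≤ k) :
    V * Real.cos θ * (-k * Real.cos θ - Real.sin θ / r + 1 / r) ≤ 0 := by
  obtain ⟨h0, h1⟩ := hθ
  have hrpos : 0 < r := lt_of_lt_of_le hra hr
  have hsin : 0 ≤ Real.sin θ := Real.sin_nonneg_of_nonneg_of_le_pi h0 h1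
  have hsin1 : Real.sin θ ≤ 1 := Real.sin_le_one θ
  rcases le_or_gt (Real.cos θ) 0 with hc | hc
  · have h2 : 0 ≤ -k * Real.cos θ - Real.sin θ / r + 1 / r := by
      have : Real.sin θ / r ≤ 1 / r := by
        gcongr
      nlinarith
    exact mul_nonpos_of_nonpos_of_nonneg (mul_nonpos_of_nonneg_of_nonpos hV.le hc) h2
  · have hc1 : Real.cos θ ≤ 1 := Real.cos_le_one θ
    have hsum : 1 ≤ Real.cos θ + Real.sin θ := by
      nlinarith [Real.sin_sq_add_cos_sq θ]
    have h2 : -k * Real.cos θ - Real.sin θ / r + 1 / r ≤ 0 := by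
      have hk' : Real.cos θ / r ≤ k * Real.cos θ := by
        rw [div_le_iff₀ hrpos] at hkr ⊢
        nlinarith
      have : (1 - Real.cos θ - Real.sin θ) / r ≤ 0 := by
        apply div_nonpos_of_nonpos_of_nonneg (by linarith) hrpos.le
      have hexp : (1 - Real.cos θ - Real.sin θ) / r
          = 1 / r - Real.cos θ / r - Real.sin θ / r := by ring
      linarith [hexp ▸ this]
    exact mul_nonpos_of_nonneg_of_nonpos (mul_nonneg hV.le hc.le) h2
end

section
/- Let V > 0, k > 1/r_d, r_d > 0, r_a = sqrt(r_d^2 - 1/k^2). The 2×2 matrix A with entries A11 = 0, A12 = V, A21 = -k*V*r_a^2/(r_d^3*sqrt(1 - r_a^2/r_d^2)) - V/r_d^2, A22 = -k*V is Hurwitz, i.e., all eigenvalues of A have negative real part. -/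
lemma quad_root_re_neg (a b : ℝ) (ha : 0 < a) (hb : 0 < b) (μ : ℂ)
    (h : μ ^ 2 + (a : ℂ) * μ + (b : ℂ) = 0) : μ.re < 0 := by
  set x := μ.re with hx
  set y := μ.im with hy
  have hre : x ^ 2 - y ^ 2 + a * x + b = 0 := by
    have := congrArg Complex.re h
    simp [pow_two, Complex.add_re, Complex.mul_re, Complex.ofReal_re,
      Complex.ofReal_im] at this
    nlinarith [this]
  have him : y * (2 * x + a) = 0 := by
    have := congrArg Complex.im h
    simp [pow_two, Complex.add_im, Complex.mul_im, Complex.ofReal_re,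
      Complex.ofReal_im] at this
    nlinarith [this]
  rcases mul_eq_zero.mp him with h0 | h0
  · by_contra hge
    push_neg at hge
    nlinarith [hre, h0]
  · nlinarith

theorem stmt_7 (V k r_d : ℝ) (hV : 0 < V) (hrd : 0 < r_d) (hk : 1 / r_d < k)
    (r_a : ℝ) (hra : r_a = Real.sqrt (r_d ^ 2 - 1 / k ^ 2)) :
    ∀ μ ∈ spectrum ℂ
      ((Matrix.of ![![(0 : ℝ), V],
          ![-k * V * r_a ^ 2 / (r_d ^ 3 * Real.sqrt (1 - r_a ^ 2 / r_d ^ 2)) - V / r_d ^ 2,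
            -k * V]]).map (Complex.ofReal)),
      μ.re < 0 := by
  intro μ hμ
  set c : ℝ := -k * V * r_a ^ 2 / (r_d ^ 3 * Real.sqrt (1 - r_a ^ 2 / r_d ^ 2)) - V / r_d ^ 2
    with hc
  have hk0 : 0 < k := lt_trans (by positivity) hk
  have hcneg : c < 0 := by
    have h1 : k * V * r_a ^ 2 / (r_d ^ 3 * Real.sqrt (1 - r_a ^ 2 / r_d ^ 2)) ≥ 0 := by
      positivity
    have h2 : 0 < V / r_d ^ 2 := by positivity
    rw [hc]
    have : -k * V * r_a ^ 2 / (r_d ^ 3 * Real.sqrt (1 - r_a ^ 2 / r_d ^ 2))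
        = -(k * V * r_a ^ 2 / (r_d ^ 3 * Real.sqrt (1 - r_a ^ 2 / r_d ^ 2))) := by ring
    rw [this]; linarith
  -- spectrum membership gives det (μ • 1 - M) = 0
  rw [spectrum.mem_iff] at hμ
  have hdet : (μ ^ 2 + (k * V : ℝ) * μ + ((-V * c : ℝ) : ℂ)) = 0 := by
    by_contra hne
    apply hμ
    rw [Matrix.isUnit_iff_isUnit_det, isUnit_iff_ne_zero]
    have : ((algebraMap ℂ (Matrix (Fin 2) (Fin 2) ℂ)) μ -
        (Matrix.of ![![(0 : ℝ), V],
          ![c, -k * V]]).map (Complex.ofReal)).det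
        = μ ^ 2 + (k * V : ℝ) * μ + ((-V * c : ℝ) : ℂ) := by
      rw [Matrix.det_fin_two]
      simp [Matrix.algebraMap_matrix_apply, Matrix.map_apply]
      push_cast
      ring
    rw [this]
    exact hne
  exact quad_root_re_neg (k * V) (-V * c) (by positivity) (by nlinarith) μ hdet
end
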